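/- Suppose nr = (q^m−1)/s for positive integers m and s with m ≥ 2, and suppose {l_i : i ∈ Z_{n,r}} = {1, m}. If N_m ≥ 2 and either N_1 is even or r ≤ 2, then δ^{(1)}_{⌊N_1/2⌋+1} > δ^{(m)}_{⌊N_m/2⌋}. -/

import Mathlib

open scoped Classical

/-- The `q`-cyclotomic coset of `i` modulo `N`, with representatives taken in `{1, …, N}`. -/
noncomputable def cosetOf (q N i : ℕ) : Finset ℕ :=
  (Finset.Icc 1 N).filter (fun x => ∃ j : ℕ, x ≡ i * q ^ j [MOD N])

/-- `Z_{n,r} = {1 + i r : 0 ≤ i ≤ n-1}`. -/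
def Zset (n r : ℕ) : Finset ℕ := (Finset.range n).image (fun i => 1 + i * r)

/-- The collection of `q`-cyclotomic cosets contained in `Z_{n,r}`. -/
noncomputable def cosetsIn (q n r : ℕ) : Finset (Finset ℕ) :=
  (Zset n r).image (fun i => cosetOf q (n * r) i)

/-- `N_l`: the number of `q`-cyclotomic cosets of size `l` contained in `Z_{n,r}`. -/
noncomputable def Ncount (q n r l : ℕ) : ℕ :=
  ((cosetsIn q n r).filter (fun C => C.card = l)).card

/-- Coset leader: the smallest element of a coset. -/
noncomputable def leader (C : Finset ℕ) : ℕ := sInf (C : Set ℕ)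

/-- The sorted (increasing) list of coset leaders of the cosets of size `l` in `Z_{n,r}`. -/
noncomputable def leaderList (q n r l : ℕ) : List ℕ :=
  Finset.sort (((cosetsIn q n r).filter (fun C => C.card = l)).image leader) (· ≤ ·)

/-- `δ_i^{(l)}`: the `i`-th smallest coset leader (1-indexed). -/
noncomputable def delta (q n r l i : ℕ) : ℕ := (leaderList q n r l).getD (i - 1) 0

lemma sort_getD_lt_of_count {F : Finset ℕ} {T k : ℕ} (hk : 1 ≤ k)
    (hcount : k ≤ (F.filter (· < T)).card) :
    (Finset.sort F (· ≤ ·)).getD (k-1) 0 < T := by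
  set L := Finset.sort F (· ≤ ·) with hL
  have hlen : L.length = F.card := Finset.length_sort _
  have hcard : k ≤ F.card := hcount.trans (Finset.card_le_card (Finset.filter_subset _ _))
  have hklen : k - 1 < L.length := by omega
  have hget : L.getD (k-1) 0 = L.get ⟨k-1, hklen⟩ := by
    simp [List.getD_eq_getElem?_getD, List.getElem?_eq_getElem hklen]
  rw [hget]
  by_contra hcon
  push_neg at hcon
  have hinj : ∀ y ∈ F.filter (· < T), L.idxOf y ∈ Finset.range (k-1) := by
    intro y hy
    rw [Finset.mem_filter] at hy
    have hyL : y ∈ L := (Finset.mem_sort _).2 hy.1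
    have hidx : L.idxOf y < L.length := List.idxOf_lt_length_iff.2 hyL
    rw [Finset.mem_range]
    by_contra hge
    push_neg at hge
    have hmono : L.get ⟨k-1, hklen⟩ ≤ L.get ⟨L.idxOf y, hidx⟩ :=
      (Finset.pairwise_sort F (· ≤ ·)).rel_get_of_le (by simp [Fin.le_def]; omega)
    rw [List.idxOf_get] at hmono
    have := hy.2
    omega
  have hcc : (F.filter (· < T)).card ≤ (Finset.range (k-1)).card := by
    apply Finset.card_le_card_of_injOn _ hinj
    intro a ha b hb hab
    rw [Finset.mem_coe, Finset.mem_filter] at ha hb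
    have haL : a ∈ L := (Finset.mem_sort _).2 ha.1
    have hbL : b ∈ L := (Finset.mem_sort _).2 hb.1
    have h1 := List.idxOf_get (List.idxOf_lt_length_iff.2 haL)
    have h2 := List.idxOf_get (List.idxOf_lt_length_iff.2 hbL)
    rw [← h1, ← h2]
    congr 1
    exact Fin.ext hab
  rw [Finset.card_range] at hcc
  omega

lemma le_sort_getD_of_count {F : Finset ℕ} {T k : ℕ} (hk : 1 ≤ k) (hkc : k ≤ F.card)
    (hcount : (F.filter (· < T)).card ≤ k - 1) :
    T ≤ (Finset.sort F (· ≤ ·)).getD (k-1) 0 := by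
  set L := Finset.sort F (· ≤ ·) with hL
  have hlen : L.length = F.card := Finset.length_sort _
  have hklen : k - 1 < L.length := by omega
  have hget : L.getD (k-1) 0 = L.get ⟨k-1, hklen⟩ := by
    simp [List.getD_eq_getElem?_getD, List.getElem?_eq_getElem hklen]
  rw [hget]
  by_contra hcon
  push_neg at hcon
  have hmap : ∀ i ∈ Finset.range k, L.getD i 0 ∈ F.filter (· < T) := by
    intro i hi
    rw [Finset.mem_range] at hi
    have hil : i < L.length := by omega
    have hgd : L.getD i 0 = L.get ⟨i, hil⟩ := by
      simp [List.getD_eq_getElem?_getD, List.getElem?_eq_getElem hil]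
    have hle : L.get ⟨i, hil⟩ ≤ L.get ⟨k-1, hklen⟩ :=
      (Finset.pairwise_sort F (· ≤ ·)).rel_get_of_le (by simp [Fin.le_def]; omega)
    rw [Finset.mem_filter, hgd]
    exact ⟨(Finset.mem_sort _).1 (L.get_mem _), by omega⟩
  have hcc : (Finset.range k).card ≤ (F.filter (· < T)).card := by
    apply Finset.card_le_card_of_injOn _ hmap
    intro a ha b hb hab
    rw [Finset.mem_coe, Finset.mem_range] at ha hb
    have hal : a < L.length := by omega
    have hbl : b < L.length := by omega
    have hga : L.getD a 0 = L.get ⟨a, hal⟩ := by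
      simp [List.getD_eq_getElem?_getD, List.getElem?_eq_getElem hal]
    have hgb : L.getD b 0 = L.get ⟨b, hbl⟩ := by
      simp [List.getD_eq_getElem?_getD, List.getElem?_eq_getElem hbl]
    have hab' : L.getD a 0 = L.getD b 0 := hab
    rw [hga, hgb] at hab'
    have := (Finset.sort_nodup F (· ≤ ·)).get_inj_iff.1 hab'
    simpa using congrArg Fin.val this
  rw [Finset.card_range] at hcc
  omega

lemma sort_getD_mem {F : Finset ℕ} {k : ℕ} (hk : 1 ≤ k) (hkc : k ≤ F.card) :
    (Finset.sort F (· ≤ ·)).getD (k-1) 0 ∈ F := by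
  set L := Finset.sort F (· ≤ ·) with hL
  have hlen : L.length = F.card := Finset.length_sort _
  have hklen : k - 1 < L.length := by omega
  have hget : L.getD (k-1) 0 = L.get ⟨k-1, hklen⟩ := by
    simp [List.getD_eq_getElem?_getD, List.getElem?_eq_getElem hklen]
  rw [hget]
  exact (Finset.mem_sort _).1 (L.get_mem _)

/-- representative in `[1,N]` -/
def rep (N v : ℕ) : ℕ := (v - 1) % N + 1

lemma rep_one_le (N v : ℕ) : 1 ≤ rep N v := by simp [rep]

lemma rep_le (N v : ℕ) (hN : 0 < N) : rep N v ≤ N := by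
  have := Nat.mod_lt (v-1) hN; simp [rep]; omega

lemma rep_modEq (N v : ℕ) (hv : 1 ≤ v) : rep N v ≡ v [MOD N] := by
  have h1 : (v - 1) % N ≡ v - 1 [MOD N] := Nat.mod_modEq _ _
  have h2 : (v - 1) % N + 1 ≡ (v-1) + 1 [MOD N] := h1.add_right 1
  simpa [rep, Nat.sub_add_cancel hv] using h2

lemma rep_eq_self {N v : ℕ} (h1 : 1 ≤ v) (h2 : v ≤ N) : rep N v = v := by
  have : v - 1 < N := by omega
  simp [rep, Nat.mod_eq_of_lt this]; omega

lemma eq_of_modEq_Icc {N a b : ℕ} (ha1 : 1 ≤ a) (ha2 : a ≤ N) (hb1 : 1 ≤ b) (hb2 : b ≤ N)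
    (h : a ≡ b [MOD N]) : a = b := by
  have h' : (a - 1) % N = (b - 1) % N := by
    have : (a-1) + 1 ≡ (b-1) + 1 [MOD N] := by
      simpa [Nat.sub_add_cancel ha1, Nat.sub_add_cancel hb1] using h
    have := Nat.ModEq.add_right_cancel' 1 this
    exact this
  have ha : (a-1) % N = a - 1 := Nat.mod_eq_of_lt (by omega)
  have hb : (b-1) % N = b - 1 := Nat.mod_eq_of_lt (by omega)
  omega

lemma mem_cosetOf {q N i x : ℕ} :
    x ∈ cosetOf q N i ↔ (1 ≤ x ∧ x ≤ N) ∧ ∃ j : ℕ, x ≡ i * q ^ j [MOD N] := by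
  simp [cosetOf, Finset.mem_filter, Finset.mem_Icc]

lemma self_mem_cosetOf {q N i : ℕ} (h1 : 1 ≤ i) (h2 : i ≤ N) : i ∈ cosetOf q N i :=
  mem_cosetOf.2 ⟨⟨h1, h2⟩, 0, by simp [Nat.ModEq.refl]⟩

lemma cosetOf_congr {q N i i' : ℕ} (h : i ≡ i' [MOD N]) : cosetOf q N i = cosetOf q N i' := by
  ext x
  simp only [mem_cosetOf]
  constructor
  · rintro ⟨hx, j, hj⟩; exact ⟨hx, j, hj.trans (h.mul_right _)⟩
  · rintro ⟨hx, j, hj⟩; exact ⟨hx, j, hj.trans ((h.symm).mul_right _)⟩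

lemma pow_mul_modEq_self {q N c : ℕ} (h : c * q ≡ c [MOD N]) (j : ℕ) :
    c * q ^ j ≡ c [MOD N] := by
  induction j with
  | zero => simp [Nat.ModEq.refl]
  | succ j ih =>
      calc c * q ^ (j+1) = (c * q) * q ^ j := by ring
        _ ≡ c * q ^ j [MOD N] := h.mul_right _
        _ ≡ c [MOD N] := ih

lemma modEq_orbit_symm {q N i x : ℕ} (hq : Nat.Coprime q N) (hN : 0 < N) {j : ℕ}
    (h : x ≡ i * q ^ j [MOD N]) : ∃ j' : ℕ, i ≡ x * q ^ j' [MOD N] := by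
  have he : q ^ (Nat.totient N) ≡ 1 [MOD N] := Nat.ModEq.pow_totient hq
  have hφ : 0 < Nat.totient N := Nat.totient_pos.2 hN
  refine ⟨j * (Nat.totient N - 1), ?_⟩
  have h1 : q ^ (j * Nat.totient N) ≡ 1 [MOD N] := by
    have := he.pow j
    simpa [← pow_mul, mul_comm] using this
  calc i = i * 1 := by ring
    _ ≡ i * q ^ (j * Nat.totient N) [MOD N] := (h1.symm).mul_left i
    _ = (i * q ^ j) * q ^ (j * (Nat.totient N - 1)) := by
        rw [mul_assoc, ← pow_add]
        congr 2
        obtain ⟨t, ht⟩ := Nat.exists_eq_add_of_lt hφ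
        have ht' : Nat.totient N = t + 1 := by omega
        rw [ht']
        have : t + 1 - 1 = t := by omega
        rw [this]; ring
    _ ≡ x * q ^ (j * (Nat.totient N - 1)) [MOD N] := (h.symm).mul_right _

lemma cosetOf_eq_of_mem {q N i x : ℕ} (hq : Nat.Coprime q N) (hN : 0 < N)
    (hx : x ∈ cosetOf q N i) : cosetOf q N x = cosetOf q N i := by
  obtain ⟨hxr, j0, hj0⟩ := mem_cosetOf.1 hx
  ext y
  simp only [mem_cosetOf]
  constructor
  · rintro ⟨hy, j, hj⟩
    refine ⟨hy, j0 + j, ?_⟩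
    calc y ≡ x * q ^ j [MOD N] := hj
      _ ≡ (i * q ^ j0) * q ^ j [MOD N] := hj0.mul_right _
      _ = i * q ^ (j0 + j) := by ring
  · rintro ⟨hy, j, hj⟩
    obtain ⟨j', hj'⟩ := modEq_orbit_symm hq hN hj0
    refine ⟨hy, j' + j, ?_⟩
    calc y ≡ i * q ^ j [MOD N] := hj
      _ ≡ (x * q ^ j') * q ^ j [MOD N] := hj'.mul_right _
      _ = x * q ^ (j' + j) := by ring

lemma card_cosetOf_eq_one_iff {q N i : ℕ} (hq0 : 0 < q) (h1 : 1 ≤ i) (h2 : i ≤ N) :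
    (cosetOf q N i).card = 1 ↔ i * q ≡ i [MOD N] := by
  constructor
  · intro hc
    obtain ⟨a, ha⟩ := Finset.card_eq_one.1 hc
    have hi : i ∈ cosetOf q N i := self_mem_cosetOf h1 h2
    have hiq : rep N (i*q) ∈ cosetOf q N i := by
      refine mem_cosetOf.2 ⟨⟨rep_one_le _ _, rep_le _ _ (by omega)⟩, 1, ?_⟩
      simpa [pow_one] using rep_modEq N (i*q) (by exact Nat.mul_pos h1 hq0)
    rw [ha, Finset.mem_singleton] at hi hiq
    have : rep N (i*q) ≡ i * q [MOD N] := rep_modEq N (i*q) (by exact Nat.mul_pos h1 hq0)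
    rw [hiq, ← hi] at this
    exact this.symm
  · intro h
    have hall : ∀ x ∈ cosetOf q N i, x = i := by
      intro x hx
      obtain ⟨⟨hx1, hx2⟩, j, hj⟩ := mem_cosetOf.1 hx
      exact eq_of_modEq_Icc hx1 hx2 h1 h2 (hj.trans (pow_mul_modEq_self h j))
    have hsub : cosetOf q N i ⊆ {i} := fun x hx => Finset.mem_singleton.2 (hall x hx)
    have : cosetOf q N i = {i} :=
      Finset.Subset.antisymm hsub (Finset.singleton_subset_iff.2 (self_mem_cosetOf h1 h2))
    simp [this]

section Psi

variable {q N c : ℕ}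

/-- reflection `x ↦ c - x` in `[1,N]` -/
def psi (c N x : ℕ) : ℕ := rep N (c + N - x)

lemma psi_one_le (c N x : ℕ) : 1 ≤ psi c N x := rep_one_le _ _

lemma psi_le (hN : 0 < N) (c x : ℕ) : psi c N x ≤ N := rep_le _ _ hN

lemma psi_add_modEq (hN : 0 < N) (hc : 1 ≤ c) {x : ℕ} (hx : x ≤ N) :
    psi c N x + x ≡ c [MOD N] := by
  have h1 : psi c N x ≡ c + N - x [MOD N] := rep_modEq N _ (by omega)
  have h2 : psi c N x + x ≡ (c + N - x) + x [MOD N] := h1.add_right x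
  have h3 : (c + N - x) + x = c + N := by omega
  rw [h3] at h2
  calc psi c N x + x ≡ c + N [MOD N] := h2
    _ ≡ c + 0 [MOD N] := Nat.ModEq.add_left c (Nat.modEq_zero_iff_dvd.2 dvd_rfl)
    _ = c := by ring

lemma psi_zmod (hN : 0 < N) (hc : 1 ≤ c) {x : ℕ} (hx : x ≤ N) :
    (psi c N x : ZMod N) = (c : ZMod N) - (x : ZMod N) := by
  have := (ZMod.natCast_eq_natCast_iff _ _ _).2 (psi_add_modEq hN hc hx)
  push_cast at this
  linear_combination this

lemma psi_psi (hN : 0 < N) (hc : 1 ≤ c) {x : ℕ} (hx1 : 1 ≤ x) (hx2 : x ≤ N) :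
    psi c N (psi c N x) = x := by
  have h1 : (psi c N (psi c N x) : ZMod N) = (x : ZMod N) := by
    rw [psi_zmod hN hc (psi_le hN c x), psi_zmod hN hc hx2]
    ring
  exact eq_of_modEq_Icc (psi_one_le _ _ _) (psi_le hN _ _) hx1 hx2
    ((ZMod.natCast_eq_natCast_iff _ _ _).1 h1)

lemma psi_mem_cosetOf (hN : 0 < N) (hc : 1 ≤ c) (hcq : c * q ≡ c [MOD N])
    {i x : ℕ} (hx : x ∈ cosetOf q N i) (hi1 : 1 ≤ i) (hi2 : i ≤ N) :
    psi c N x ∈ cosetOf q N (psi c N i) := by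
  obtain ⟨⟨hx1, hx2⟩, j, hj⟩ := mem_cosetOf.1 hx
  refine mem_cosetOf.2 ⟨⟨psi_one_le _ _ _, psi_le hN _ _⟩, j, ?_⟩
  rw [← ZMod.natCast_eq_natCast_iff]
  have hxz : (x : ZMod N) = (i : ZMod N) * (q : ZMod N) ^ j := by
    have := (ZMod.natCast_eq_natCast_iff _ _ _).2 hj
    push_cast at this; exact this
  have hcz : (c : ZMod N) * (q : ZMod N) ^ j = (c : ZMod N) := by
    have := (ZMod.natCast_eq_natCast_iff _ _ _).2 (pow_mul_modEq_self hcq j)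
    push_cast at this; exact this
  push_cast
  rw [psi_zmod hN hc hx2, psi_zmod hN hc hi2, hxz]
  linear_combination -hcz

lemma card_cosetOf_psi (hq : Nat.Coprime q N) (hN : 0 < N) (hc : 1 ≤ c)
    (hcq : c * q ≡ c [MOD N]) {i : ℕ} (hi1 : 1 ≤ i) (hi2 : i ≤ N) :
    (cosetOf q N (psi c N i)).card = (cosetOf q N i).card := by
  apply Finset.card_nbij' (psi c N) (psi c N)
  · intro x hx
    have h2 : psi c N x ∈ cosetOf q N (psi c N (psi c N i)) :=
      psi_mem_cosetOf hN hc hcq hx (psi_one_le _ _ _) (psi_le hN _ _)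
    rwa [psi_psi hN hc hi1 hi2] at h2
  · intro y hy
    exact psi_mem_cosetOf hN hc hcq hy hi1 hi2
  · intro x hx
    have hx' := mem_cosetOf.1 hx
    exact psi_psi hN hc hx'.1.1 hx'.1.2
  · intro y hy
    have hy' := mem_cosetOf.1 hy
    exact psi_psi hN hc hy'.1.1 hy'.1.2

end Psi

lemma mem_Zset_iff {n r x : ℕ} (hn : 0 < n) (hr : 0 < r) :
    x ∈ Zset n r ↔ (1 ≤ x ∧ x ≤ n * r ∧ x ≡ 1 [MOD r]) := by
  simp only [Zset, Finset.mem_image, Finset.mem_range]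
  constructor
  · rintro ⟨i, hi, rfl⟩
    refine ⟨by omega, ?_, ?_⟩
    · have h1 : (i+1) * r ≤ n * r := Nat.mul_le_mul_right r (by omega)
      have h2 : (i+1) * r = i * r + r := by ring
      omega
    · show (1 + i * r) % r = 1 % r
      simp [Nat.add_mul_mod_self_right]
  · rintro ⟨h1, h2, h3⟩
    have hdvd : r ∣ x - 1 := (Nat.modEq_iff_dvd' h1).1 h3.symm
    obtain ⟨i, hi⟩ := hdvd
    have hi' : x - 1 = i * r := by rw [hi]; ring
    refine ⟨i, ?_, by omega⟩
    by_contra hge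
    push_neg at hge
    have hnr : n * r ≤ i * r := Nat.mul_le_mul_right r hge
    omega

lemma leader_mem {C : Finset ℕ} (hC : C.Nonempty) : leader C ∈ C := by
  have : (C : Set ℕ).Nonempty := by exact_mod_cast hC
  exact_mod_cast Nat.sInf_mem this

lemma leader_le {C : Finset ℕ} {x : ℕ} (hx : x ∈ C) : leader C ≤ x :=
  Nat.sInf_le (by exact_mod_cast hx)

section Main

variable {q n r : ℕ}

lemma cosetOf_subset_Zset (hn : 0 < n) (hr : 0 < r) (hqr : q ≡ 1 [MOD r])
    {i : ℕ} (hi : i ∈ Zset n r) : cosetOf q (n * r) i ⊆ Zset n r := by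
  intro x hx
  obtain ⟨⟨hx1, hx2⟩, j, hj⟩ := mem_cosetOf.1 hx
  obtain ⟨hi1, hi2, hi3⟩ := (mem_Zset_iff hn hr).1 hi
  refine (mem_Zset_iff hn hr).2 ⟨hx1, hx2, ?_⟩
  have hrd : r ∣ n * r := dvd_mul_left r n
  have h1 : x ≡ i * q ^ j [MOD r] := hj.of_dvd hrd
  have h2 : i * q ^ j ≡ 1 * 1 ^ j [MOD r] := Nat.ModEq.mul hi3 (hqr.pow j)
  simpa using h1.trans h2

lemma mem_cosetsIn {C : Finset ℕ} :
    C ∈ cosetsIn q n r ↔ ∃ i ∈ Zset n r, C = cosetOf q (n * r) i := by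
  simp only [cosetsIn, Finset.mem_image]
  constructor
  · rintro ⟨i, hi, rfl⟩; exact ⟨i, hi, rfl⟩
  · rintro ⟨i, hi, rfl⟩; exact ⟨i, hi, rfl⟩

lemma coset_nonempty (hn : 0 < n) (hr : 0 < r) {C : Finset ℕ} (hC : C ∈ cosetsIn q n r) :
    C.Nonempty := by
  obtain ⟨i, hi, rfl⟩ := mem_cosetsIn.1 hC
  obtain ⟨hi1, hi2, _⟩ := (mem_Zset_iff hn hr).1 hi
  exact ⟨i, self_mem_cosetOf hi1 hi2⟩

lemma coset_subset (hn : 0 < n) (hr : 0 < r) (hqr : q ≡ 1 [MOD r]) {C : Finset ℕ}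
    (hC : C ∈ cosetsIn q n r) : C ⊆ Zset n r := by
  obtain ⟨i, hi, rfl⟩ := mem_cosetsIn.1 hC
  exact cosetOf_subset_Zset hn hr hqr hi

lemma coset_eq_of_mem (hq : Nat.Coprime q (n*r)) (hn : 0 < n) (hr : 0 < r)
    {C : Finset ℕ} (hC : C ∈ cosetsIn q n r) {x : ℕ} (hx : x ∈ C) :
    C = cosetOf q (n * r) x := by
  obtain ⟨i, hi, rfl⟩ := mem_cosetsIn.1 hC
  exact (cosetOf_eq_of_mem hq (by positivity) hx).symm

lemma coset_eq_cosetOf_leader (hq : Nat.Coprime q (n*r)) (hn : 0 < n) (hr : 0 < r)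
    {C : Finset ℕ} (hC : C ∈ cosetsIn q n r) :
    C = cosetOf q (n * r) (leader C) :=
  coset_eq_of_mem hq hn hr hC (leader_mem (coset_nonempty hn hr hC))

lemma leader_injOn (hq : Nat.Coprime q (n*r)) (hn : 0 < n) (hr : 0 < r)
    {C C' : Finset ℕ} (hC : C ∈ cosetsIn q n r) (hC' : C' ∈ cosetsIn q n r)
    (h : leader C = leader C') : C = C' := by
  rw [coset_eq_cosetOf_leader hq hn hr hC, coset_eq_cosetOf_leader hq hn hr hC', h]

end Main

section AP

/-- solutions of `x ≡ 1 (mod r)`, `d ∣ x` in `[1, N]` -/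
def Bset (d r N : ℕ) : Finset ℕ := (Finset.Icc 1 N).filter (fun x => x ≡ 1 [MOD r] ∧ d ∣ x)

lemma mem_Bset {d r N x : ℕ} :
    x ∈ Bset d r N ↔ (1 ≤ x ∧ x ≤ N) ∧ x ≡ 1 [MOD r] ∧ d ∣ x := by
  simp [Bset, Finset.mem_Icc]

variable {d r N : ℕ}

lemma Bset_coprime (hne : (Bset d r N).Nonempty) : Nat.Coprime d r := by
  obtain ⟨t, ht⟩ := hne
  obtain ⟨⟨ht1, _⟩, htr, htd⟩ := mem_Bset.1 ht
  have hg : Nat.gcd d r ∣ t := (Nat.gcd_dvd_left d r).trans htd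
  have hgr : Nat.gcd d r ∣ r := Nat.gcd_dvd_right d r
  have h0 : t ≡ 1 [MOD Nat.gcd d r] := htr.of_dvd hgr
  have h1 : (0:ℕ) ≡ t [MOD Nat.gcd d r] := (Nat.modEq_zero_iff_dvd.2 hg).symm
  have h2 : (0:ℕ) ≡ 1 [MOD Nat.gcd d r] := h1.trans h0
  have h4 := (Nat.modEq_iff_dvd' (by omega)).1 h2
  have h5 : Nat.gcd d r ∣ 1 := by simpa using h4
  unfold Nat.Coprime
  exact Nat.dvd_one.1 h5

lemma Bset_modEq (hco : Nat.Coprime d r) {x y : ℕ} (hx : x ∈ Bset d r N)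
    (hy : y ∈ Bset d r N) : x ≡ y [MOD d * r] := by
  obtain ⟨_, hxr, hxd⟩ := mem_Bset.1 hx
  obtain ⟨_, hyr, hyd⟩ := mem_Bset.1 hy
  have h1 : x ≡ y [MOD d] :=
    ((Nat.modEq_zero_iff_dvd.2 hxd)).trans ((Nat.modEq_zero_iff_dvd.2 hyd)).symm
  have h2 : x ≡ y [MOD r] := hxr.trans hyr.symm
  exact (Nat.modEq_and_modEq_iff_modEq_mul hco).1 ⟨h1, h2⟩

lemma Bset_closed (hr : 0 < r) {x y : ℕ} (hx : x ∈ Bset d r N)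
    (hy1 : 1 ≤ y) (hy2 : y ≤ N) (hxy : y ≡ x [MOD d * r]) : y ∈ Bset d r N := by
  obtain ⟨_, hxr, hxd⟩ := mem_Bset.1 hx
  refine mem_Bset.2 ⟨⟨hy1, hy2⟩, ?_, ?_⟩
  · exact (hxy.of_dvd (dvd_mul_left r d)).trans hxr
  · have h1 : y ≡ x [MOD d] := hxy.of_dvd (dvd_mul_right d r)
    have h2 : y ≡ 0 [MOD d] := h1.trans (Nat.modEq_zero_iff_dvd.2 hxd)
    exact Nat.modEq_zero_iff_dvd.1 h2

lemma Bset_min_le (hd : 0 < d) (hr : 0 < r) (hne : (Bset d r N).Nonempty) :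
    leader (Bset d r N) ≤ d * r := by
  set t1 := leader (Bset d r N) with ht1def
  have ht1 : t1 ∈ Bset d r N := leader_mem hne
  obtain ⟨⟨h1, h2⟩, _, _⟩ := mem_Bset.1 ht1
  by_contra hgt
  push_neg at hgt
  have hD : 0 < d * r := by positivity
  have hmem : t1 - d * r ∈ Bset d r N := by
    apply Bset_closed hr ht1 (by omega) (by omega)
    have hsub : t1 - (t1 - d*r) = d*r := by omega
    exact (Nat.modEq_iff_dvd' (by omega)).2 (by rw [hsub])
  have hle := leader_le hmem
  omega

lemma Bset_eq_image (hd : 0 < d) (hr : 0 < r) (hdN : d * r ∣ N)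
    (hne : (Bset d r N).Nonempty) :
    Bset d r N =
      (Finset.range (N / (d*r))).image (fun i => leader (Bset d r N) + i * (d*r)) := by
  have hco := Bset_coprime hne
  set t1 := leader (Bset d r N) with ht1def
  have ht1 : t1 ∈ Bset d r N := leader_mem hne
  obtain ⟨⟨ht11, ht12⟩, _, _⟩ := mem_Bset.1 ht1
  have ht1D : t1 ≤ d * r := Bset_min_le hd hr hne
  have hD : 0 < d * r := by positivity
  have hND : (N / (d*r)) * (d*r) = N := Nat.div_mul_cancel hdN
  ext y
  simp only [Finset.mem_image, Finset.mem_range]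
  constructor
  · intro hy
    obtain ⟨⟨hy1, hy2⟩, _, _⟩ := mem_Bset.1 hy
    have hmod : y ≡ t1 [MOD d*r] := Bset_modEq hco hy ht1
    have hle : t1 ≤ y := leader_le hy
    have hdvd : d*r ∣ y - t1 := (Nat.modEq_iff_dvd' hle).1 hmod.symm
    obtain ⟨i, hi⟩ := hdvd
    refine ⟨i, ?_, ?_⟩
    · by_contra hge
      push_neg at hge
      have h3 : (N/(d*r)) * (d*r) ≤ i * (d*r) := Nat.mul_le_mul_right _ hge
      have h4 : (d*r) * i = i * (d*r) := by ring
      omega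
    · have h4 : (d*r) * i = i * (d*r) := by ring
      omega
  · rintro ⟨i, hi, rfl⟩
    apply Bset_closed hr ht1
    · omega
    · have h3 : (i+1) * (d*r) ≤ (N/(d*r)) * (d*r) := Nat.mul_le_mul_right _ (by omega)
      have h4 : (i+1) * (d*r) = i * (d*r) + d*r := by ring
      omega
    · have h5 : t1 + i * (d*r) ≡ t1 + 0 [MOD d*r] :=
        Nat.ModEq.add_left _ (Nat.modEq_zero_iff_dvd.2 (dvd_mul_left (d*r) i))
      simpa using h5

lemma Bset_card (hd : 0 < d) (hr : 0 < r) (hdN : d * r ∣ N)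
    (hne : (Bset d r N).Nonempty) : (Bset d r N).card = N / (d*r) := by
  rw [Bset_eq_image hd hr hdN hne]
  rw [Finset.card_image_of_injOn, Finset.card_range]
  intro a _ b _ hab
  simp only at hab
  have hD : 0 < d * r := by positivity
  exact Nat.eq_of_mul_eq_mul_right hD (by omega)

lemma Bset_filter_card (hd : 0 < d) (hr : 0 < r) (hdN : d * r ∣ N)
    (hne : (Bset d r N).Nonempty) {j : ℕ} (hj : j ≤ N / (d*r)) :
    ((Bset d r N).filter (· < leader (Bset d r N) + j * (d*r))).card = j := by
  have hD : 0 < d * r := by positivity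
  set t1 := leader (Bset d r N) with ht1def
  have himg : (Bset d r N).filter (· < t1 + j * (d*r)) =
      (Finset.range j).image (fun i => t1 + i * (d*r)) := by
    rw [Bset_eq_image hd hr hdN hne, Finset.filter_image]
    congr 1
    ext i
    simp only [Finset.mem_filter, Finset.mem_range]
    constructor
    · rintro ⟨h1, h2⟩
      have : i * (d*r) < j * (d*r) := by omega
      exact lt_of_mul_lt_mul_right this (by omega)
    · intro h
      have : i * (d*r) < j * (d*r) := (Nat.mul_lt_mul_right hD).2 h
      exact ⟨by omega, by omega⟩
  rw [himg, Finset.card_image_of_injOn, Finset.card_range]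
  intro a _ b _ hab
  simp only at hab
  exact Nat.eq_of_mul_eq_mul_right hD (by omega)

end AP

section NT

lemma size1_iff {q n r : ℕ} (hq2 : 2 ≤ q) (hn : 0 < n) (hr : 0 < r) (hrdvd : r ∣ q - 1)
    (x : ℕ) : (x * q ≡ x [MOD n * r]) ↔ n / Nat.gcd n ((q-1)/r) ∣ x := by
  set e := (q-1)/r with he
  have hre : r * e = q - 1 := Nat.mul_div_cancel' hrdvd
  have he1 : 1 ≤ e := by
    rcases Nat.eq_zero_or_pos e with h | h
    · exfalso; rw [h] at hre; omega
    · exact h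
  set g := Nat.gcd n e with hg
  have hg1 : 0 < g := Nat.gcd_pos_of_pos_left e hn
  set d := n / g with hd
  set e' := e / g with he'
  have hnd : g * d = n := Nat.mul_div_cancel' (Nat.gcd_dvd_left n e)
  have hee : g * e' = e := Nat.mul_div_cancel' (Nat.gcd_dvd_right n e)
  have hcop : Nat.Coprime d e' := Nat.coprime_div_gcd_div_gcd hg1
  have hmulsub : x * q - x = x * (q-1) := by
    have := Nat.mul_sub x q 1
    simpa using this.symm
  have step1 : (x * q ≡ x [MOD n * r]) ↔ n * r ∣ x * (q-1) := by
    have hle : x ≤ x * q := Nat.le_mul_of_pos_right x (by omega)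
    constructor
    · intro h
      have h2 := (Nat.modEq_iff_dvd' hle).1 h.symm
      rwa [hmulsub] at h2
    · intro h
      rw [← hmulsub] at h
      exact ((Nat.modEq_iff_dvd' hle).2 h).symm
  have step2 : n * r ∣ x * (q-1) ↔ n ∣ x * e := by
    rw [← hre]
    have h1 : x * (r * e) = (x * e) * r := by ring
    rw [h1]
    exact Nat.mul_dvd_mul_iff_right hr
  have step3 : n ∣ x * e ↔ d ∣ x := by
    constructor
    · intro h
      have h1 : g * d ∣ g * (x * e') := by
        rw [hnd]
        have : g * (x * e') = x * e := by rw [← hee]; ring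
        rwa [this]
      have h2 : d ∣ x * e' := (Nat.mul_dvd_mul_iff_left hg1).1 h1
      exact hcop.dvd_of_dvd_mul_right h2
    · rintro ⟨t, rfl⟩
      refine ⟨t * e', ?_⟩
      rw [← hnd, ← hee]; ring
  rw [step1, step2, step3]

end NT

section Glue

lemma leaders1_eq {q n r : ℕ} (hq2 : 2 ≤ q) (hn : 0 < n) (hr : 0 < r) (hrdvd : r ∣ q-1)
    (hqr : q ≡ 1 [MOD r]) (hqco : Nat.Coprime q (n*r)) :
    ((cosetsIn q n r).filter (fun C => C.card = 1)).image leader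
      = Bset (n / Nat.gcd n ((q-1)/r)) r (n*r) := by
  ext x
  simp only [Finset.mem_image, Finset.mem_filter]
  constructor
  · rintro ⟨C, ⟨hC, hcard⟩, rfl⟩
    have hne := coset_nonempty hn hr hC
    have hlm := leader_mem hne
    have hlz : leader C ∈ Zset n r := coset_subset hn hr hqr hC hlm
    obtain ⟨h1, h2, h3⟩ := (mem_Zset_iff hn hr).1 hlz
    have hCl : C = cosetOf q (n*r) (leader C) := coset_eq_cosetOf_leader hqco hn hr hC
    have hsz : leader C * q ≡ leader C [MOD n*r] := by
      rw [← card_cosetOf_eq_one_iff (by omega) h1 h2, ← hCl]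
      exact hcard
    exact mem_Bset.2 ⟨⟨h1, h2⟩, h3, (size1_iff hq2 hn hr hrdvd _).1 hsz⟩
  · intro hx
    obtain ⟨⟨h1, h2⟩, h3, h4⟩ := mem_Bset.1 hx
    have hsz : x * q ≡ x [MOD n*r] := (size1_iff hq2 hn hr hrdvd _).2 h4
    have hxz : x ∈ Zset n r := (mem_Zset_iff hn hr).2 ⟨h1, h2, h3⟩
    have hC : cosetOf q (n*r) x ∈ cosetsIn q n r := mem_cosetsIn.2 ⟨x, hxz, rfl⟩
    have hcard : (cosetOf q (n*r) x).card = 1 :=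
      (card_cosetOf_eq_one_iff (by omega) h1 h2).2 hsz
    refine ⟨cosetOf q (n*r) x, ⟨hC, hcard⟩, ?_⟩
    obtain ⟨a, ha⟩ := Finset.card_eq_one.1 hcard
    have hxa : x ∈ cosetOf q (n*r) x := self_mem_cosetOf h1 h2
    have hla : leader (cosetOf q (n*r) x) ∈ cosetOf q (n*r) x := leader_mem ⟨x, hxa⟩
    rw [ha, Finset.mem_singleton] at hxa hla
    rw [ha, hla, hxa]

lemma leader_range {q n r : ℕ} (hn : 0 < n) (hr : 0 < r) (hqr : q ≡ 1 [MOD r])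
    {C : Finset ℕ} (hC : C ∈ cosetsIn q n r) :
    1 ≤ leader C ∧ leader C ≤ n*r ∧ leader C ≡ 1 [MOD r] := by
  have hne := coset_nonempty hn hr hC
  have hlz : leader C ∈ Zset n r := coset_subset hn hr hqr hC (leader_mem hne)
  exact (mem_Zset_iff hn hr).1 hlz

lemma bad_le_good {q n r m c T : ℕ} (hq2 : 2 ≤ q) (hn : 0 < n) (hr : 0 < r)
    (hqr : q ≡ 1 [MOD r]) (hqco : Nat.Coprime q (n*r)) (hm : 2 ≤ m)
    (hc1 : 1 ≤ c) (hcq : c * q ≡ c [MOD n*r]) (hcr : c ≡ 2 [MOD r])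
    (hTsz : T * q ≡ T [MOD n*r])
    (hpt : ∀ x, 1 ≤ x → x ≤ n*r → ¬ (x * q ≡ x [MOD n*r]) → T < x → psi c (n*r) x < T) :
    (((cosetsIn q n r).filter (fun C => C.card = m)).filter (fun C => ¬ leader C < T)).card
      ≤ (((cosetsIn q n r).filter (fun C => C.card = m)).filter
          (fun C => leader C < T)).card := by
  set N := n * r with hN
  have hN0 : 0 < N := by positivity
  apply Finset.card_le_card_of_injOn (fun C => cosetOf q N (psi c N (leader C)))
  · intro C hC
    rw [Finset.mem_coe, Finset.mem_filter, Finset.mem_filter] at hC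
    obtain ⟨⟨hCin, hCm⟩, hbad⟩ := hC
    push_neg at hbad
    obtain ⟨hx01, hx02, hx03⟩ := leader_range hn hr hqr hCin
    set x0 := leader C with hx0def
    have hCx0 : C = cosetOf q N x0 := coset_eq_cosetOf_leader hqco hn hr hCin
    have hns : ¬ (x0 * q ≡ x0 [MOD N]) := by
      intro hcontra
      have hone := (card_cosetOf_eq_one_iff (show 0 < q by omega) hx01 hx02).2 hcontra
      rw [← hCx0] at hone; omega
    have hTx0 : T < x0 := by
      rcases Nat.lt_or_ge T x0 with h | h
      · exact h
      · have : x0 = T := by omega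
        rw [this] at hns; exact absurd hTsz hns
    have hlt := hpt x0 hx01 hx02 hns hTx0
    have hp1 : 1 ≤ psi c N x0 := psi_one_le _ _ _
    have hp2 : psi c N x0 ≤ N := psi_le hN0 _ _
    have hp3 : psi c N x0 ≡ 1 [MOD r] := by
      have hadd : psi c N x0 + x0 ≡ c [MOD N] := psi_add_modEq hN0 hc1 hx02
      have hrN : r ∣ N := dvd_mul_left r n
      have h5 : psi c N x0 + x0 ≡ c [MOD r] := hadd.of_dvd hrN
      have h6 : psi c N x0 + x0 ≡ 1 + 1 [MOD r] := h5.trans (by simpa using hcr)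
      have h7 : psi c N x0 + x0 ≡ 1 + x0 [MOD r] := h6.trans ((hx03.symm).add_left 1)
      exact Nat.ModEq.add_right_cancel' x0 h7
    have hpZ : psi c N x0 ∈ Zset n r := (mem_Zset_iff hn hr).2 ⟨hp1, hp2, hp3⟩
    rw [Finset.mem_coe, Finset.mem_filter, Finset.mem_filter]
    refine ⟨⟨mem_cosetsIn.2 ⟨_, hpZ, rfl⟩, ?_⟩, ?_⟩
    · rw [card_cosetOf_psi hqco hN0 hc1 hcq hx01 hx02, ← hCx0]; exact hCm
    · have hmem : psi c N x0 ∈ cosetOf q N (psi c N x0) := self_mem_cosetOf hp1 hp2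
      exact lt_of_le_of_lt (leader_le hmem) hlt
  · intro C1 h1 C2 h2 heq
    simp only [Finset.mem_coe, Finset.mem_filter] at h1 h2
    obtain ⟨⟨h1in, _⟩, _⟩ := h1
    obtain ⟨⟨h2in, _⟩, _⟩ := h2
    obtain ⟨h11, h12, _⟩ := leader_range hn hr hqr h1in
    obtain ⟨h21, h22, _⟩ := leader_range hn hr hqr h2in
    simp only at heq
    have hmem2 : psi c N (leader C2) ∈ cosetOf q N (psi c N (leader C1)) := by
      rw [heq]
      exact self_mem_cosetOf (psi_one_le _ _ _) (psi_le hN0 _ _)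
    have hmem3 : psi c N (psi c N (leader C2)) ∈
        cosetOf q N (psi c N (psi c N (leader C1))) :=
      psi_mem_cosetOf hN0 hc1 hcq hmem2 (psi_one_le _ _ _) (psi_le hN0 _ _)
    rw [psi_psi hN0 hc1 h21 h22, psi_psi hN0 hc1 h11 h12] at hmem3
    have hcc : cosetOf q N (leader C2) = cosetOf q N (leader C1) :=
      cosetOf_eq_of_mem hqco hN0 hmem3
    rw [coset_eq_cosetOf_leader hqco hn hr h1in, coset_eq_cosetOf_leader hqco hn hr h2in]
    exact hcc.symm

end Glue

theorem stmt9 (q n r m s : ℕ) (hq : IsPrimePow q) (hn : 0 < n) (hco : Nat.Coprime n q)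
    (hr : 0 < r) (hrdvd : r ∣ q - 1) (hm : 2 ≤ m) (hs : 0 < s)
    (hnrs : n * r * s = q ^ m - 1)
    (hset : (Zset n r).image (fun i => (cosetOf q (n * r) i).card) = {1, m})
    (hNm : 2 ≤ Ncount q n r m)
    (hcond : Even (Ncount q n r 1) ∨ r ≤ 2) :
    delta q n r m (Ncount q n r m / 2) < delta q n r 1 (Ncount q n r 1 / 2 + 1) := by
  classical
  set N := n * r with hNdef
  have hN0 : 0 < N := by positivity
  have hq2 : 2 ≤ q := hq.two_le
  have hqr : q ≡ 1 [MOD r] := ((Nat.modEq_iff_dvd' (by omega)).2 hrdvd).symm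
  have hqr' : Nat.Coprime q r := by
    have h1 : Nat.Coprime q (q-1) := by
      have hco1 : Nat.Coprime (q - 1 + 1) (q-1) := by
        unfold Nat.Coprime; simp [Nat.gcd_comm, Nat.gcd_self_add_left]
      have h2 : q - 1 + 1 = q := by omega
      rwa [h2] at hco1
    exact h1.coprime_dvd_right hrdvd
  have hqco : Nat.Coprime q N := Nat.Coprime.mul_right hco.symm hqr'
  -- the arithmetic progression of size-1 elements
  set g := Nat.gcd n ((q-1)/r) with hgdef
  set d := n / g with hddef
  have hg0 : 0 < g := Nat.gcd_pos_of_pos_left _ hn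
  have hd0 : 0 < d := Nat.div_pos (Nat.le_of_dvd hn (Nat.gcd_dvd_left _ _)) hg0
  have hdn : d ∣ n := Nat.div_dvd_of_dvd (Nat.gcd_dvd_left _ _)
  set D := d * r with hDdef
  have hD0 : 0 < D := by positivity
  have hDN : D ∣ N := mul_dvd_mul_right hdn r
  set A := Bset d r N with hAdef
  have hA_eq : ((cosetsIn q n r).filter (fun C => C.card = 1)).image leader = A :=
    leaders1_eq hq2 hn hr hrdvd hqr hqco
  -- A is nonempty
  have hAne : A.Nonempty := by
    have h1 : (1:ℕ) ∈ ({1, m} : Finset ℕ) := by simp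
    rw [← hset] at h1
    obtain ⟨i, hiZ, hicard⟩ := Finset.mem_image.1 h1
    have hC : cosetOf q N i ∈ cosetsIn q n r := mem_cosetsIn.2 ⟨i, hiZ, rfl⟩
    have : leader (cosetOf q N i) ∈ A := by
      rw [← hA_eq]
      exact Finset.mem_image_of_mem leader (Finset.mem_filter.2 ⟨hC, hicard⟩)
    exact ⟨_, this⟩
  set N1 := Ncount q n r 1 with hN1def
  have hN1A : N1 = A.card := by
    rw [hN1def, Ncount, ← hA_eq]
    rw [Finset.card_image_of_injOn]
    intro C hC C' hC' h
    exact leader_injOn hqco hn hr (Finset.mem_filter.1 hC).1 (Finset.mem_filter.1 hC').1 h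
  have hAcard : A.card = N / D := Bset_card hd0 hr hDN hAne
  have hN1D : N1 * D = N := by
    rw [hN1A, hAcard]; exact Nat.div_mul_cancel hDN
  have hN1pos : 0 < N1 := by
    rw [hN1A]; exact Finset.card_pos.2 hAne
  set t1 := leader A with ht1def
  have ht1A : t1 ∈ A := leader_mem hAne
  obtain ⟨⟨ht11, ht12⟩, ht1r, ht1d⟩ := mem_Bset.1 ht1A
  have ht1D : t1 ≤ D := Bset_min_le hd0 hr hAne
  have ht1ge : d ≤ t1 := Nat.le_of_dvd (by omega) ht1d
  have ht1sz : t1 * q ≡ t1 [MOD N] := (size1_iff hq2 hn hr hrdvd t1).2 ht1d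
  set u := N1 / 2 with hudef
  set T' := t1 + u * D with hT'def
  have huN1 : u ≤ N1 := by omega
  have hfiltA : (A.filter (· < T')).card = u := by
    have := Bset_filter_card hd0 hr hDN hAne (j := u) (by rw [← hAcard, ← hN1A]; omega)
    rwa [← ht1def, ← hT'def] at this
  -- T is the (u+1)-th smallest element of A
  set T := delta q n r 1 (u + 1) with hTdef
  have hLL1 : leaderList q n r 1 = Finset.sort A (· ≤ ·) := by
    rw [leaderList, hA_eq]
  have hTval : T = (Finset.sort A (· ≤ ·)).getD ((u+1) - 1) 0 := by
    rw [hTdef, delta, hLL1]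
  have hu1card : u + 1 ≤ A.card := by rw [← hN1A]; omega
  have hTmem : T ∈ A := by rw [hTval]; exact sort_getD_mem (by omega) hu1card
  have hT'le : T' ≤ T := by
    rw [hTval]
    exact le_sort_getD_of_count (by omega) hu1card (by omega)
  obtain ⟨⟨hT1, hT2⟩, hTr, hTd⟩ := mem_Bset.1 hTmem
  have hTsz : T * q ≡ T [MOD N] := (size1_iff hq2 hn hr hrdvd T).2 hTd
  -- choose the reflection constant c and prove the pointwise bound
  have hkey : ∃ c : ℕ, 1 ≤ c ∧ (c * q ≡ c [MOD N]) ∧ (c ≡ 2 [MOD r]) ∧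
      (∀ x, 1 ≤ x → x ≤ N → ¬ (x * q ≡ x [MOD N]) → T < x → psi c N x < T) := by
    by_cases heven : Even N1
    · -- even case : c = 2 * t1
      obtain ⟨w, hw⟩ := heven
      have hu : N1 = 2 * u := by omega
      have h2T' : 2 * T' = 2 * t1 + N := by
        have h1 : N1 * D = 2 * (u * D) := by rw [hu]; ring
        have h2 : 2 * T' = 2 * t1 + 2 * (u * D) := by rw [hT'def]; ring
        omega
      have hu1 : 1 ≤ u := by omega
      have hDuD : D ≤ u * D := Nat.le_mul_of_pos_left D hu1
      have hcT' : 2 * t1 ≤ T' := by omega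
      refine ⟨2 * t1, by omega, ?_, ?_, ?_⟩
      · have := ht1sz.mul_left 2
        have h3 : 2 * t1 * q = 2 * (t1 * q) := by ring
        rwa [h3]
      · have := ht1r.mul_left 2
        simpa using this
      · intro x hx1 hx2 _ hTx
        have hcx : 2 * t1 < x := by omega
        have hval : psi (2*t1) N x = 2 * t1 + N - x := by
          rw [psi]
          exact rep_eq_self (by omega) (by omega)
        rw [hval]
        omega
    · -- odd case : r ≤ 2, c = 2 * N
      have hr2 : r ≤ 2 := hcond.resolve_left heven
      have hu : N1 = 2 * u + 1 := by
        rcases Nat.even_or_odd N1 with h | h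
        · exact absurd h heven
        · obtain ⟨w, hw⟩ := h; omega
      have h2T' : N ≤ 2 * T' := by
        have h1 : N1 * D = 2 * (u * D) + D := by rw [hu]; ring
        have h2 : 2 * T' = 2 * t1 + 2 * (u * D) := by rw [hT'def]; ring
        have h3 : D ≤ 2 * t1 := by
          have : d * r ≤ d * 2 := Nat.mul_le_mul_left d hr2
          omega
        omega
      refine ⟨2 * N, by omega, ?_, ?_, ?_⟩
      · have h1 : 2 * N * q ≡ 0 [MOD N] := Nat.modEq_zero_iff_dvd.2 ⟨2 * q, by ring⟩
        have h2 : 2 * N ≡ 0 [MOD N] := Nat.modEq_zero_iff_dvd.2 ⟨2, by ring⟩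
        exact h1.trans h2.symm
      · have hrdvd2 : r ∣ 2 := by interval_cases r <;> norm_num
        have h1 : 2 * N ≡ 0 [MOD r] :=
          Nat.modEq_zero_iff_dvd.2 ((dvd_mul_left r n).mul_left 2)
        have h2 : (2:ℕ) ≡ 0 [MOD r] := Nat.modEq_zero_iff_dvd.2 hrdvd2
        exact h1.trans h2.symm
      · intro x hx1 hx2 hns hTx
        have hxN : x ≠ N := by
          intro hxe
          apply hns
          rw [hxe]
          have h1 : N * q ≡ 0 [MOD N] := Nat.modEq_zero_iff_dvd.2 ⟨q, rfl⟩
          have h2 : N ≡ 0 [MOD N] := Nat.modEq_zero_iff_dvd.2 dvd_rfl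
          exact h1.trans h2.symm
        have hval : psi (2*N) N x = N - x := by
          rw [psi, rep]
          have h1 : 2 * N + N - x - 1 = (N - x - 1) + N * 2 := by omega
          rw [h1, Nat.add_mul_mod_self_left, Nat.mod_eq_of_lt (by omega)]
          omega
        rw [hval]
        omega
  obtain ⟨c, hc1, hcq, hcr, hpt⟩ := hkey
  -- counting size-m cosets
  have hbg := bad_le_good hq2 hn hr hqr hqco hm hc1 hcq hcr hTsz hpt
  set Sm := (cosetsIn q n r).filter (fun C => C.card = m) with hSm
  have hsplit : (Sm.filter (fun C => leader C < T)).card +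
      (Sm.filter (fun C => ¬ leader C < T)).card = Sm.card :=
    Finset.card_filter_add_card_filter_not _
  have hNmcard : Ncount q n r m = Sm.card := rfl
  have hgood : Ncount q n r m / 2 ≤ (Sm.filter (fun C => leader C < T)).card := by omega
  -- transfer to leaders
  have himg : ((Sm.image leader).filter (· < T)).card ≥
      (Sm.filter (fun C => leader C < T)).card := by
    have hsub : (Sm.filter (fun C => leader C < T)).image leader ⊆
        (Sm.image leader).filter (· < T) := by
      intro x hx
      obtain ⟨C, hC, rfl⟩ := Finset.mem_image.1 hx
      rw [Finset.mem_filter] at hC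
      exact Finset.mem_filter.2 ⟨Finset.mem_image_of_mem leader hC.1, hC.2⟩
    have hcardimg : ((Sm.filter (fun C => leader C < T)).image leader).card =
        (Sm.filter (fun C => leader C < T)).card := by
      apply Finset.card_image_of_injOn
      intro C hC C' hC' h
      have h1 := (Finset.mem_filter.1 (Finset.mem_coe.1 hC)).1
      have h2 := (Finset.mem_filter.1 (Finset.mem_coe.1 hC')).1
      exact leader_injOn hqco hn hr (Finset.mem_filter.1 h1).1 (Finset.mem_filter.1 h2).1 h
    calc (Sm.filter (fun C => leader C < T)).card
        = ((Sm.filter (fun C => leader C < T)).image leader).card := hcardimg.symm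
      _ ≤ ((Sm.image leader).filter (· < T)).card := Finset.card_le_card hsub
  have hfinal : delta q n r m (Ncount q n r m / 2) < T := by
    rw [delta, leaderList]
    have : Ncount q n r m / 2 ≤ ((Sm.image leader).filter (· < T)).card := by omega
    exact sort_getD_lt_of_count (by omega) this
  exact hfinal
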